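/- For all nonnegative integers ℓ and ℓ', J(ℓ,ℓ') = J(ℓ',ℓ). (Hence the truncated lightcone Hamiltonian of two-dimensional large-N_c QCD is a symmetric matrix.) -/

import Mathlib

open MeasureTheory Filter Set

/-- The Legendre polynomial `P_ℓ`, via the Rodrigues formula
`P_ℓ(w) = (1/(2^ℓ ℓ!)) (d/dw)^ℓ (w²−1)^ℓ`. -/
noncomputable def legendreP (ℓ : ℕ) (w : ℝ) : ℝ :=
  ((2 : ℝ) ^ ℓ * Nat.factorial ℓ)⁻¹ * iteratedDeriv ℓ (fun t : ℝ => (t ^ 2 - 1) ^ ℓ) w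

/-- `IsJ ℓ ℓ' v` asserts that the quantity
`J(ℓ,ℓ') = ∫₀¹ (PV ∫₀¹ P_ℓ(1−2x₁)(P_{ℓ'}(1−2x₁) − P_{ℓ'}(1−2x₂))/(x₁−x₂)² dx₂) dx₁`
is well defined and equals `v`: there is a function `g` such that for every
`x₁ ∈ (0,1)` the inner principal value (around `x₂ = x₁`) exists and equals
`g x₁`, `g` is integrable on `(0,1)`, and `∫₀¹ g = v`. -/
def IsJ (ℓ ℓ' : ℕ) (v : ℝ) : Prop :=
  ∃ g : ℝ → ℝ,
    (∀ x₁ ∈ Ioo (0 : ℝ) 1,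
      Tendsto (fun δ : ℝ =>
          ∫ x₂ in Ioo (0 : ℝ) 1 \ Ioo (x₁ - δ) (x₁ + δ),
            legendreP ℓ (1 - 2 * x₁) * (legendreP ℓ' (1 - 2 * x₁) - legendreP ℓ' (1 - 2 * x₂))
              / (x₁ - x₂) ^ 2)
        (nhdsWithin 0 (Ioi 0)) (nhds (g x₁))) ∧
    IntegrableOn g (Ioo (0 : ℝ) 1) ∧
    ∫ x₁ in Ioo (0 : ℝ) 1, g x₁ = v

noncomputable section
open Polynomial

lemma iteratedDeriv_polyeval (p : Polynomial ℝ) (n : ℕ) :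
    iteratedDeriv n (fun t : ℝ => p.eval t) = fun t => (derivative^[n] p).eval t := by
  induction n with
  | zero => simp
  | succ k ih =>
    rw [iteratedDeriv_succ, ih]
    funext t
    rw [Function.iterate_succ_apply']
    exact Polynomial.deriv _

def dd1 (P : Polynomial ℝ) (x y : ℝ) : ℝ :=
  ∑ n ∈ Finset.range (P.natDegree + 1), P.coeff n * ∑ i ∈ Finset.range n, x ^ i * y ^ (n - 1 - i)

lemma eval_sub_eval (P : Polynomial ℝ) (x y : ℝ) :
    P.eval x - P.eval y = (x - y) * dd1 P x y := by
  rw [Polynomial.eval_eq_sum_range, Polynomial.eval_eq_sum_range, ← Finset.sum_sub_distrib, dd1,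
    Finset.mul_sum]
  refine Finset.sum_congr rfl fun n _ => ?_
  rw [← mul_sub, ← geom_sum₂_mul x y n]
  ring

def dd2 (P : Polynomial ℝ) (x y : ℝ) : ℝ :=
  ∑ n ∈ Finset.range (P.natDegree + 1), P.coeff n *
    ∑ i ∈ Finset.range n, x ^ i * ∑ j ∈ Finset.range (n - 1 - i), y ^ j * x ^ (n - 1 - i - 1 - j)

lemma dd1_sub_dd1 (P : Polynomial ℝ) (x y : ℝ) :
    dd1 P x y - dd1 P x x = (y - x) * dd2 P x y := by
  rw [dd1, dd1, dd2, ← Finset.sum_sub_distrib, Finset.mul_sum]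
  refine Finset.sum_congr rfl fun n _ => ?_
  rw [← mul_sub (P.coeff n), ← Finset.sum_sub_distrib]
  have h : ∀ i ∈ Finset.range n, x ^ i * y ^ (n - 1 - i) - x ^ i * x ^ (n - 1 - i)
      = (y - x) * (x ^ i * ∑ j ∈ Finset.range (n - 1 - i), y ^ j * x ^ (n - 1 - i - 1 - j)) := by
    intro i _
    rw [← mul_sub, ← geom_sum₂_mul y x (n - 1 - i)]
    ring
  rw [Finset.sum_congr rfl h, ← Finset.mul_sum]
  ring

lemma continuous_dd2 (P : Polynomial ℝ) : Continuous fun z : ℝ × ℝ => dd2 P z.1 z.2 := by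
  unfold dd2
  exact continuous_finset_sum _ fun n _ => Continuous.mul (by fun_prop) <|
    continuous_finset_sum _ fun i _ => Continuous.mul (by fun_prop) <|
      continuous_finset_sum _ fun j _ => by fun_prop

lemma continuous_dd1 (P : Polynomial ℝ) : Continuous fun z : ℝ × ℝ => dd1 P z.1 z.2 := by
  unfold dd1
  exact continuous_finset_sum _ fun n _ => Continuous.mul (by fun_prop) <|
    continuous_finset_sum _ fun i _ => by fun_prop

lemma integrableOn_log_Ioo : IntegrableOn Real.log (Ioo (0:ℝ) 1) := by
  have hg : IntegrableOn (fun x : ℝ => 2 * x ^ (-(2:ℝ)⁻¹)) (Ioo (0:ℝ) 1) := by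
    have := (intervalIntegral.intervalIntegrable_rpow' (a := 0) (b := 1)
      (r := -(2:ℝ)⁻¹) (by norm_num))
    rw [intervalIntegrable_iff_integrableOn_Ioo_of_le (by norm_num)] at this
    exact this.const_mul 2
  refine Integrable.mono' hg (Real.measurable_log.aestronglyMeasurable) ?_
  filter_upwards [ae_restrict_mem measurableSet_Ioo] with x hx
  have hx0 : (0:ℝ) < x := hx.1
  have h1 : Real.log (x ^ (-(2:ℝ)⁻¹)) ≤ x ^ (-(2:ℝ)⁻¹) - 1 :=
    Real.log_le_sub_one_of_pos (Real.rpow_pos_of_pos hx0 _)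
  rw [Real.log_rpow hx0] at h1
  have hneg : Real.log x < 0 := Real.log_neg hx0 hx.2
  have : ‖Real.log x‖ = -Real.log x := by rw [Real.norm_eq_abs, abs_of_neg hneg]
  rw [this]
  nlinarith [Real.rpow_pos_of_pos hx0 (-(2:ℝ)⁻¹)]

lemma kernel_decomp (P Q : Polynomial ℝ) {x y : ℝ} (h : x ≠ y) :
    P.eval x * (Q.eval x - Q.eval y) / (x - y) ^ 2
      = (P.eval x * dd1 Q x x) * (x - y)⁻¹ - P.eval x * dd2 Q x y := by
  have h2 : dd1 Q x y = dd1 Q x x + (y - x) * dd2 Q x y := by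
    have := dd1_sub_dd1 Q x y; linarith
  rw [eval_sub_eval, h2]
  have hxy : x - y ≠ 0 := sub_ne_zero.2 h
  field_simp
  ring

lemma trunc_set_eq {x δ : ℝ} (hx0 : 0 < x) (hx1 : x < 1) (hδ : 0 < δ) :
    Ioo (0:ℝ) 1 \ Ioo (x - δ) (x + δ) = Ioc 0 (x - δ) ∪ Ico (x + δ) 1 := by
  ext y
  simp only [Set.mem_diff, Set.mem_Ioo, Set.mem_union, Set.mem_Ioc, Set.mem_Ico, not_and, not_lt]
  constructor
  · rintro ⟨⟨h0, h1⟩, h2⟩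
    rcases le_or_gt y (x - δ) with h | h
    · exact Or.inl ⟨h0, h⟩
    · exact Or.inr ⟨h2 h, h1⟩
  · rintro (⟨h0, h1⟩ | ⟨h0, h1⟩)
    · exact ⟨⟨h0, by linarith⟩, fun hc => absurd hc (not_lt.2 h1)⟩
    · exact ⟨⟨by linarith, h1⟩, fun _ => h0⟩

lemma integrableOn_inv_left {x δ : ℝ} (hδ : 0 < δ) :
    IntegrableOn (fun y => (x - y)⁻¹) (Ioc (0:ℝ) (x - δ)) := by
  refine (ContinuousOn.integrableOn_Icc ?_).mono_set Ioc_subset_Icc_self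
  refine (continuousOn_const.sub continuousOn_id).inv₀ fun y hy => ?_
  have : y ≤ x - δ := hy.2
  intro hc
  simp only [Pi.sub_apply, id] at hc
  nlinarith

lemma integrableOn_inv_right {x δ : ℝ} (hδ : 0 < δ) :
    IntegrableOn (fun y => (x - y)⁻¹) (Ico (x + δ) 1) := by
  refine (ContinuousOn.integrableOn_Icc ?_).mono_set Ico_subset_Icc_self
  refine (continuousOn_const.sub continuousOn_id).inv₀ fun y hy => ?_
  have : x + δ ≤ y := hy.1
  intro hc
  simp only [Pi.sub_apply, id] at hc
  nlinarith

lemma integral_inv_left {x δ : ℝ} (hx0 : 0 < x) (hδ : 0 < δ) :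
    ∫ y in Ioc (0:ℝ) (x - δ), (x - y)⁻¹ = max (Real.log x - Real.log δ) 0 := by
  rcases le_or_gt (x - δ) 0 with h | h
  · rw [Set.Ioc_eq_empty (by exact fun hc => absurd hc (not_lt.2 h)), setIntegral_empty]
    rw [max_eq_right]
    have : Real.log x ≤ Real.log δ := Real.log_le_log hx0 (by linarith)
    linarith
  · rw [← intervalIntegral.integral_of_le (by linarith)]
    rw [intervalIntegral.integral_comp_sub_left (fun u => u⁻¹) x]
    simp only [sub_zero, sub_sub_cancel]
    rw [integral_inv_of_pos hδ hx0, Real.log_div (ne_of_gt hx0) (ne_of_gt hδ)]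
    rw [max_eq_left]
    have : Real.log δ ≤ Real.log x := Real.log_le_log hδ (by linarith)
    linarith

lemma integral_inv_right {x δ : ℝ} (hx1 : x < 1) (hδ : 0 < δ) :
    ∫ y in Ico (x + δ) 1, (x - y)⁻¹ = -max (Real.log (1 - x) - Real.log δ) 0 := by
  rcases le_or_gt 1 (x + δ) with h | h
  · rw [Set.Ico_eq_empty (by exact fun hc => absurd hc (not_lt.2 h)), setIntegral_empty]
    rw [max_eq_right, neg_zero]
    have : Real.log (1 - x) ≤ Real.log δ := Real.log_le_log (by linarith) (by linarith)
    linarith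
  · rw [integral_Ico_eq_integral_Ioo, ← integral_Ioc_eq_integral_Ioo,
      ← intervalIntegral.integral_of_le (by linarith)]
    rw [intervalIntegral.integral_comp_sub_left (fun u => u⁻¹) x]
    have e1 : x - 1 < 0 := by linarith
    have e2 : x - (x + δ) = -δ := by ring
    rw [e2, integral_inv_of_neg e1 (by linarith)]
    have e3 : -δ / (x - 1) = δ / (1 - x) := by
      rw [div_eq_div_iff (by linarith) (by linarith)]; ring
    rw [e3, Real.log_div (ne_of_gt hδ) (by linarith)]
    rw [max_eq_left]
    · ring
    have : Real.log δ ≤ Real.log (1 - x) := Real.log_le_log hδ (by linarith)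
    linarith

def cPQ (P Q : Polynomial ℝ) (x : ℝ) : ℝ := P.eval x * dd1 Q x x

def EPQ (P Q : Polynomial ℝ) (x y : ℝ) : ℝ := P.eval x * dd2 Q x y

def gPQ (P Q : Polynomial ℝ) (x : ℝ) : ℝ :=
  cPQ P Q x * (Real.log x - Real.log (1 - x)) - ∫ y in Ioo (0:ℝ) 1, EPQ P Q x y

lemma continuous_EPQ (P Q : Polynomial ℝ) (x : ℝ) : Continuous fun y => EPQ P Q x y := by
  unfold EPQ
  exact continuous_const.mul ((continuous_dd2 Q).comp (Continuous.prodMk_right x))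

lemma integrableOn_EPQ (P Q : Polynomial ℝ) (x : ℝ) {s : Set ℝ} (hs : s ⊆ Icc (0:ℝ) 1) :
    IntegrableOn (fun y => EPQ P Q x y) s :=
  ((continuous_EPQ P Q x).continuousOn.integrableOn_Icc).mono_set hs

lemma integrableOn_inv_trunc {x δ : ℝ} (hx : x ∈ Ioo (0:ℝ) 1) (hδ : 0 < δ) :
    IntegrableOn (fun y => (x - y)⁻¹) (Ioo (0:ℝ) 1 \ Ioo (x - δ) (x + δ)) := by
  rw [trunc_set_eq hx.1 hx.2 hδ]
  exact (integrableOn_inv_left hδ).union (integrableOn_inv_right hδ)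

lemma integral_inv_trunc {x δ : ℝ} (hx : x ∈ Ioo (0:ℝ) 1) (hδ : 0 < δ) :
    ∫ y in Ioo (0:ℝ) 1 \ Ioo (x - δ) (x + δ), (x - y)⁻¹
      = max (Real.log x - Real.log δ) 0 - max (Real.log (1 - x) - Real.log δ) 0 := by
  rw [trunc_set_eq hx.1 hx.2 hδ]
  have hdisj : Disjoint (Ioc (0:ℝ) (x - δ)) (Ico (x + δ) 1) :=
    Set.disjoint_left.2 fun y hy1 hy2 => by
      have := hy1.2; have := hy2.1; linarith
  rw [setIntegral_union hdisj measurableSet_Ico (integrableOn_inv_left hδ)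
    (integrableOn_inv_right hδ), integral_inv_left hx.1 hδ, integral_inv_right hx.2 hδ]
  ring

lemma trunc_subset_Icc {x δ : ℝ} : Ioo (0:ℝ) 1 \ Ioo (x - δ) (x + δ) ⊆ Icc (0:ℝ) 1 :=
  Set.diff_subset.trans Set.Ioo_subset_Icc_self

lemma trunc_formula (P Q : Polynomial ℝ) {x : ℝ} (hx : x ∈ Ioo (0:ℝ) 1) {δ : ℝ} (hδ : 0 < δ) :
    ∫ y in Ioo (0:ℝ) 1 \ Ioo (x - δ) (x + δ), P.eval x * (Q.eval x - Q.eval y) / (x - y) ^ 2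
      = cPQ P Q x * (max (Real.log x - Real.log δ) 0 - max (Real.log (1 - x) - Real.log δ) 0)
        - ∫ y in Ioo (0:ℝ) 1 \ Ioo (x - δ) (x + δ), EPQ P Q x y := by
  set s := Ioo (0:ℝ) 1 \ Ioo (x - δ) (x + δ) with hs
  have hmeas : MeasurableSet s := measurableSet_Ioo.diff measurableSet_Ioo
  have hne : ∀ y ∈ s, x ≠ y := by
    intro y hy hc
    exact hy.2 (hc ▸ Set.mem_Ioo.2 ⟨by linarith, by linarith⟩)
  have hcongr : ∫ y in s, P.eval x * (Q.eval x - Q.eval y) / (x - y) ^ 2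
      = ∫ y in s, (cPQ P Q x * (x - y)⁻¹ - EPQ P Q x y) := by
    refine setIntegral_congr_fun hmeas fun y hy => ?_
    exact kernel_decomp P Q (hne y hy)
  rw [hcongr, integral_sub (((integrableOn_inv_trunc hx hδ)).const_mul _)
    (integrableOn_EPQ P Q x trunc_subset_Icc)]
  rw [integral_const_mul, integral_inv_trunc hx hδ]

lemma tendsto_E_trunc (P Q : Polynomial ℝ) {x : ℝ} :
    Tendsto (fun δ : ℝ => ∫ y in Ioo (0:ℝ) 1 \ Ioo (x - δ) (x + δ), EPQ P Q x y)
      (nhdsWithin 0 (Ioi 0)) (nhds (∫ y in Ioo (0:ℝ) 1, EPQ P Q x y)) := by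
  obtain ⟨C, hC⟩ : ∃ C, ∀ y ∈ Icc (0:ℝ) 1, ‖EPQ P Q x y‖ ≤ C :=
    isCompact_Icc.exists_bound_of_continuousOn (continuous_EPQ P Q x).continuousOn
  have key : ∀ δ : ℝ, ∫ y in Ioo (0:ℝ) 1 \ Ioo (x - δ) (x + δ), EPQ P Q x y
      = (∫ y in Ioo (0:ℝ) 1, EPQ P Q x y)
        - ∫ y in Ioo (x - δ) (x + δ) ∩ Ioo (0:ℝ) 1, EPQ P Q x y := by
    intro δ
    rw [← Set.diff_inter_self_eq_diff, eq_sub_iff_add_eq,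
      integral_diff (measurableSet_Ioo.inter measurableSet_Ioo)
        (integrableOn_EPQ P Q x Set.Ioo_subset_Icc_self) Set.inter_subset_right]
    exact sub_add_cancel _ _
  simp only [key]
  have h0 : Tendsto (fun δ : ℝ => ∫ y in Ioo (x - δ) (x + δ) ∩ Ioo (0:ℝ) 1, EPQ P Q x y)
      (nhdsWithin 0 (Ioi 0)) (nhds 0) := by
    rw [tendsto_zero_iff_norm_tendsto_zero]
    refine squeeze_zero' (g := fun δ : ℝ => (max C 0) * (2 * δ))
      (Eventually.of_forall fun δ => norm_nonneg _) ?_ ?_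
    · filter_upwards [self_mem_nhdsWithin] with δ (hδ : 0 < δ)
      have hsub : Ioo (x - δ) (x + δ) ∩ Ioo (0:ℝ) 1 ⊆ Icc (0:ℝ) 1 :=
        Set.inter_subset_right.trans Set.Ioo_subset_Icc_self
      have hb : ‖∫ y in Ioo (x - δ) (x + δ) ∩ Ioo (0:ℝ) 1, EPQ P Q x y‖
          ≤ (max C 0) * (volume (Ioo (x - δ) (x + δ) ∩ Ioo (0:ℝ) 1)).toReal := by
        refine norm_setIntegral_le_of_norm_le_const ?_ (fun y hy => ?_)
        · exact lt_of_le_of_lt (measure_mono hsub) (by simp)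
        · exact le_trans (hC y (hsub hy)) (le_max_left _ _)
      refine hb.trans ?_
      have hv : (volume (Ioo (x - δ) (x + δ) ∩ Ioo (0:ℝ) 1)).toReal ≤ 2 * δ := by
        have h1 : volume (Ioo (x - δ) (x + δ) ∩ Ioo (0:ℝ) 1) ≤ volume (Ioo (x - δ) (x + δ)) :=
          measure_mono Set.inter_subset_left
        rw [Real.volume_Ioo] at h1
        calc (volume (Ioo (x - δ) (x + δ) ∩ Ioo (0:ℝ) 1)).toReal
            ≤ (ENNReal.ofReal (x + δ - (x - δ))).toReal :=
              ENNReal.toReal_mono (by simp) h1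
          _ ≤ 2 * δ := by rw [ENNReal.toReal_ofReal (by linarith)]; linarith
      exact mul_le_mul_of_nonneg_left hv (le_max_right _ _)
    · have : Tendsto (fun δ : ℝ => (max C 0) * (2 * δ)) (nhds 0) (nhds ((max C 0) * (2 * 0))) :=
        (continuous_const.mul (continuous_const.mul continuous_id)).tendsto 0
      simpa using this.mono_left nhdsWithin_le_nhds
  simpa using tendsto_const_nhds.sub h0

lemma integrableOn_log_one_sub_Ioo : IntegrableOn (fun x => Real.log (1 - x)) (Ioo (0:ℝ) 1) := by
  have h : IntervalIntegrable Real.log volume 0 1 := by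
    rw [intervalIntegrable_iff_integrableOn_Ioo_of_le (by norm_num)]
    exact integrableOn_log_Ioo
  have h2 := (h.comp_sub_left 1).symm
  simpa [intervalIntegrable_iff_integrableOn_Ioo_of_le] using h2

lemma tendsto_PV (P Q : Polynomial ℝ) {x : ℝ} (hx : x ∈ Ioo (0:ℝ) 1) :
    Tendsto (fun δ : ℝ => ∫ y in Ioo (0:ℝ) 1 \ Ioo (x - δ) (x + δ),
        P.eval x * (Q.eval x - Q.eval y) / (x - y) ^ 2)
      (nhdsWithin 0 (Ioi 0)) (nhds (gPQ P Q x)) := by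
  have h1 : Tendsto (fun δ : ℝ => cPQ P Q x * (Real.log x - Real.log (1 - x))
        - ∫ y in Ioo (0:ℝ) 1 \ Ioo (x - δ) (x + δ), EPQ P Q x y)
      (nhdsWithin 0 (Ioi 0)) (nhds (gPQ P Q x)) :=
    tendsto_const_nhds.sub (tendsto_E_trunc P Q)
  refine Tendsto.congr' ?_ h1
  have hmem : Ioo (0:ℝ) (min x (1 - x)) ∈ nhdsWithin (0:ℝ) (Ioi 0) :=
    Ioo_mem_nhdsGT_of_mem ⟨le_refl 0, lt_min hx.1 (by linarith [hx.2])⟩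
  filter_upwards [hmem] with δ hδ
  obtain ⟨hδ0, hδm⟩ := hδ
  have hδx : δ < x := lt_of_lt_of_le hδm (min_le_left _ _)
  have hδx' : δ < 1 - x := lt_of_lt_of_le hδm (min_le_right _ _)
  rw [trunc_formula P Q hx hδ0]
  have m1 : max (Real.log x - Real.log δ) 0 = Real.log x - Real.log δ :=
    max_eq_left (by have := Real.log_le_log hδ0 hδx.le; linarith)
  have m2 : max (Real.log (1 - x) - Real.log δ) 0 = Real.log (1 - x) - Real.log δ :=
    max_eq_left (by have := Real.log_le_log hδ0 hδx'.le; linarith)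
  rw [m1, m2]
  ring_nf

lemma stronglyMeasurable_integral_EPQ (P Q : Polynomial ℝ) :
    StronglyMeasurable (fun x => ∫ y in Ioo (0:ℝ) 1, EPQ P Q x y) := by
  have hc : Continuous fun z : ℝ × ℝ => EPQ P Q z.1 z.2 := by
    unfold EPQ
    exact Continuous.mul (by fun_prop) (continuous_dd2 Q)
  exact hc.stronglyMeasurable.integral_prod_right'

lemma bound_integral_EPQ (P Q : Polynomial ℝ) :
    ∃ C : ℝ, ∀ x ∈ Icc (0:ℝ) 1, ‖∫ y in Ioo (0:ℝ) 1, EPQ P Q x y‖ ≤ C := by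
  have hc : Continuous fun z : ℝ × ℝ => EPQ P Q z.1 z.2 := by
    unfold EPQ
    exact Continuous.mul (by fun_prop) (continuous_dd2 Q)
  obtain ⟨C, hC⟩ := (isCompact_Icc.prod isCompact_Icc).exists_bound_of_continuousOn
    (s := Icc (0:ℝ) 1 ×ˢ Icc (0:ℝ) 1) hc.continuousOn
  refine ⟨C * 1, fun x hx => ?_⟩
  have hb : ‖∫ y in Ioo (0:ℝ) 1, EPQ P Q x y‖ ≤ C * (volume (Ioo (0:ℝ) 1)).toReal :=
    norm_setIntegral_le_of_norm_le_const (by simp)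
      (fun y hy => hC (x, y) (Set.mk_mem_prod hx (Set.Ioo_subset_Icc_self hy)))
  simpa using hb

lemma continuous_cPQ (P Q : Polynomial ℝ) : Continuous (cPQ P Q) := by
  unfold cPQ
  exact (P.continuous_aeval).mul ((continuous_dd1 Q).comp (continuous_id.prodMk continuous_id))

lemma integrableOn_gPQ (P Q : Polynomial ℝ) : IntegrableOn (gPQ P Q) (Ioo (0:ℝ) 1) := by
  unfold gPQ
  apply Integrable.sub
  · obtain ⟨Cc, hCc⟩ :=
      isCompact_Icc.exists_bound_of_continuousOn (continuous_cPQ P Q).continuousOn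
    refine Integrable.bdd_mul (c := Cc)
      (integrableOn_log_Ioo.sub integrableOn_log_one_sub_Ioo)
      ((continuous_cPQ P Q).aestronglyMeasurable.restrict) ?_
    filter_upwards [ae_restrict_mem measurableSet_Ioo] with x hxm
    exact hCc x (Set.Ioo_subset_Icc_self hxm)
  · obtain ⟨C, hC⟩ := bound_integral_EPQ P Q
    refine (integrable_const C).mono'
      ((stronglyMeasurable_integral_EPQ P Q).aestronglyMeasurable.restrict) ?_
    filter_upwards [ae_restrict_mem measurableSet_Ioo] with x hxm
    exact hC x (Set.Ioo_subset_Icc_self hxm)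

def Kd (P Q : Polynomial ℝ) (x y : ℝ) : ℝ :=
  (Q.eval x * P.eval y - P.eval x * Q.eval y) / (x - y) ^ 2

def Wd (P Q : Polynomial ℝ) (δ x y : ℝ) : ℝ := if δ ≤ |x - y| then Kd P Q x y else 0

lemma Kd_eq (P Q : Polynomial ℝ) (x y : ℝ) :
    Kd P Q x y = P.eval x * (Q.eval x - Q.eval y) / (x - y) ^ 2
      - Q.eval x * (P.eval x - P.eval y) / (x - y) ^ 2 := by
  unfold Kd
  rw [div_sub_div_same]
  congr 1
  ring

lemma Kd_antisymm (P Q : Polynomial ℝ) (x y : ℝ) : Kd P Q y x = -Kd P Q x y := by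
  unfold Kd
  have h : (y - x) ^ 2 = (x - y) ^ 2 := by ring
  rw [h, ← neg_div]
  congr 1
  ring

lemma Wd_antisymm (P Q : Polynomial ℝ) (δ x y : ℝ) : Wd P Q δ y x = -Wd P Q δ x y := by
  unfold Wd
  rw [abs_sub_comm y x]
  by_cases h : δ ≤ |x - y|
  · rw [if_pos h, if_pos h, Kd_antisymm]
  · rw [if_neg h, if_neg h, neg_zero]

lemma trunc_set_eq' (x δ : ℝ) :
    Ioo (0:ℝ) 1 \ Ioo (x - δ) (x + δ) = Ioo (0:ℝ) 1 ∩ {y | δ ≤ |x - y|} := by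
  ext y
  simp only [Set.mem_diff, Set.mem_inter_iff, Set.mem_Ioo, Set.mem_setOf_eq, not_and, not_lt]
  refine and_congr_right fun _ => ?_
  rw [le_abs]
  constructor
  · intro h
    rcases lt_or_ge (x - δ) y with h1 | h1
    · exact Or.inr (by have := h h1; linarith)
    · exact Or.inl (by linarith)
  · rintro (h | h) h2 <;> linarith

lemma G_as_W (P Q : Polynomial ℝ) (x δ : ℝ) :
    ∫ y in Ioo (0:ℝ) 1 \ Ioo (x - δ) (x + δ), Kd P Q x y
      = ∫ y in Ioo (0:ℝ) 1, Wd P Q δ x y := by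
  have hms : MeasurableSet {y : ℝ | δ ≤ |x - y|} :=
    (isClosed_le continuous_const (by fun_prop)).measurableSet
  rw [trunc_set_eq', ← setIntegral_indicator hms]
  refine setIntegral_congr_fun measurableSet_Ioo fun y _ => ?_
  by_cases h : δ ≤ |x - y| <;>
    simp [Wd, Set.indicator_apply, h]

instance : IsFiniteMeasure (volume.restrict (Ioo (0:ℝ) 1)) :=
  ⟨by simp [Measure.restrict_apply_univ]⟩

lemma integrable_Wd (P Q : Polynomial ℝ) {δ : ℝ} (hδ : 0 < δ) :
    Integrable (fun z : ℝ × ℝ => Wd P Q δ z.1 z.2)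
      ((volume.restrict (Ioo (0:ℝ) 1)).prod (volume.restrict (Ioo (0:ℝ) 1))) := by
  have hnum : Continuous fun z : ℝ × ℝ => Q.eval z.1 * P.eval z.2 - P.eval z.1 * Q.eval z.2 := by
    fun_prop
  obtain ⟨M, hM⟩ := (isCompact_Icc.prod isCompact_Icc).exists_bound_of_continuousOn
    (s := Icc (0:ℝ) 1 ×ˢ Icc (0:ℝ) 1) hnum.continuousOn
  have hmeasW : Measurable fun z : ℝ × ℝ => Wd P Q δ z.1 z.2 := by
    unfold Wd Kd
    exact Measurable.ite
      ((isClosed_le continuous_const (by fun_prop)).measurableSet)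
      (hnum.measurable.div (by fun_prop)) measurable_const
  refine (integrable_const (max M 0 / δ ^ 2)).mono' hmeasW.aestronglyMeasurable ?_
  rw [Measure.prod_restrict]
  filter_upwards [ae_restrict_mem (measurableSet_Ioo.prod measurableSet_Ioo)] with z hz
  obtain ⟨hz1, hz2⟩ := hz
  by_cases h : δ ≤ |z.1 - z.2|
  · show ‖Wd P Q δ z.1 z.2‖ ≤ _
    unfold Wd
    rw [if_pos h]
    unfold Kd
    rw [Real.norm_eq_abs, abs_div, abs_pow, sq_abs]
    have h1 : |Q.eval z.1 * P.eval z.2 - P.eval z.1 * Q.eval z.2| ≤ max M 0 :=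
      le_trans (hM z (Set.mk_mem_prod (Set.Ioo_subset_Icc_self hz1)
        (Set.Ioo_subset_Icc_self hz2))) (le_max_left _ _)
    have h2 : δ ^ 2 ≤ (z.1 - z.2) ^ 2 := by
      rw [← sq_abs (z.1 - z.2)]
      exact pow_le_pow_left₀ hδ.le h 2
    exact div_le_div₀ (le_max_right _ _) h1 (by positivity) h2
  · show ‖Wd P Q δ z.1 z.2‖ ≤ _
    unfold Wd
    rw [if_neg h]
    simp only [norm_zero]
    positivity

lemma integral_W_zero (P Q : Polynomial ℝ) {δ : ℝ} (hδ : 0 < δ) :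
    ∫ x in Ioo (0:ℝ) 1, ∫ y in Ioo (0:ℝ) 1, Wd P Q δ x y = 0 := by
  have hswap := integral_integral_swap (f := fun x y => Wd P Q δ x y) (integrable_Wd P Q hδ)
  have hneg : ∀ y : ℝ, ∫ x in Ioo (0:ℝ) 1, Wd P Q δ x y
      = - ∫ x in Ioo (0:ℝ) 1, Wd P Q δ y x := by
    intro y
    rw [← integral_neg]
    exact setIntegral_congr_fun measurableSet_Ioo fun x _ => by rw [← Wd_antisymm]
  have : (∫ x in Ioo (0:ℝ) 1, ∫ y in Ioo (0:ℝ) 1, Wd P Q δ x y)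
      = - ∫ x in Ioo (0:ℝ) 1, ∫ y in Ioo (0:ℝ) 1, Wd P Q δ x y := by
    calc (∫ x in Ioo (0:ℝ) 1, ∫ y in Ioo (0:ℝ) 1, Wd P Q δ x y)
        = ∫ y in Ioo (0:ℝ) 1, ∫ x in Ioo (0:ℝ) 1, Wd P Q δ x y := hswap
      _ = ∫ y in Ioo (0:ℝ) 1, (- ∫ x in Ioo (0:ℝ) 1, Wd P Q δ y x) :=
          setIntegral_congr_fun measurableSet_Ioo fun y _ => hneg y
      _ = - ∫ y in Ioo (0:ℝ) 1, ∫ x in Ioo (0:ℝ) 1, Wd P Q δ y x := integral_neg _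
  linarith

lemma integrableOn_F_trunc (P Q : Polynomial ℝ) {x δ : ℝ} (hx : x ∈ Ioo (0:ℝ) 1) (hδ : 0 < δ) :
    IntegrableOn (fun y => P.eval x * (Q.eval x - Q.eval y) / (x - y) ^ 2)
      (Ioo (0:ℝ) 1 \ Ioo (x - δ) (x + δ)) := by
  refine IntegrableOn.congr_fun
    (((integrableOn_inv_trunc hx hδ).const_mul (cPQ P Q x)).sub
      (integrableOn_EPQ P Q x trunc_subset_Icc))
    (fun y hy => ?_) (measurableSet_Ioo.diff measurableSet_Ioo)
  have hne : x ≠ y := fun hc => hy.2 (hc ▸ Set.mem_Ioo.2 ⟨by linarith, by linarith⟩)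
  exact (kernel_decomp P Q hne).symm

lemma Kd_trunc_eq (P Q : Polynomial ℝ) {x δ : ℝ} (hx : x ∈ Ioo (0:ℝ) 1) (hδ : 0 < δ) :
    ∫ y in Ioo (0:ℝ) 1 \ Ioo (x - δ) (x + δ), Kd P Q x y
      = (∫ y in Ioo (0:ℝ) 1 \ Ioo (x - δ) (x + δ),
          P.eval x * (Q.eval x - Q.eval y) / (x - y) ^ 2)
        - ∫ y in Ioo (0:ℝ) 1 \ Ioo (x - δ) (x + δ),
            Q.eval x * (P.eval x - P.eval y) / (x - y) ^ 2 := by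
  rw [← integral_sub (integrableOn_F_trunc P Q hx hδ) (integrableOn_F_trunc Q P hx hδ)]
  exact setIntegral_congr_fun (measurableSet_Ioo.diff measurableSet_Ioo)
    fun y _ => Kd_eq P Q x y

lemma E_trunc_bound (P Q : Polynomial ℝ) :
    ∃ C : ℝ, 0 ≤ C ∧ ∀ (x : ℝ), x ∈ Icc (0:ℝ) 1 → ∀ s : Set ℝ, s ⊆ Ioo (0:ℝ) 1 →
      ‖∫ y in s, EPQ P Q x y‖ ≤ C := by
  have hc : Continuous fun z : ℝ × ℝ => EPQ P Q z.1 z.2 := by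
    unfold EPQ
    exact Continuous.mul (by fun_prop) (continuous_dd2 Q)
  obtain ⟨C, hC⟩ := (isCompact_Icc.prod isCompact_Icc).exists_bound_of_continuousOn
    (s := Icc (0:ℝ) 1 ×ˢ Icc (0:ℝ) 1) hc.continuousOn
  refine ⟨max C 0, le_max_right _ _, fun x hx s hs => ?_⟩
  have hb : ‖∫ y in s, EPQ P Q x y‖ ≤ max C 0 * (volume s).toReal := by
    refine norm_setIntegral_le_of_norm_le_const
      (lt_of_le_of_lt (measure_mono hs) (by simp)) (fun y hy => ?_)
    · exact le_trans (hC (x, y) (Set.mk_mem_prod hx (Set.Ioo_subset_Icc_self (hs hy))))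
        (le_max_left _ _)
  refine hb.trans ?_
  have h1 : (volume s).toReal ≤ 1 := by
    have := ENNReal.toReal_mono (by simp : volume (Ioo (0:ℝ) 1) ≠ ⊤) (measure_mono hs)
    simpa using this
  calc max C 0 * (volume s).toReal ≤ max C 0 * 1 :=
        mul_le_mul_of_nonneg_left h1 (le_max_right _ _)
    _ = max C 0 := mul_one _

lemma G_bound (P Q : Polynomial ℝ) :
    ∃ C1 C2 : ℝ, 0 ≤ C1 ∧ 0 ≤ C2 ∧ ∀ δ : ℝ, 0 < δ → ∀ x ∈ Ioo (0:ℝ) 1,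
      ‖∫ y in Ioo (0:ℝ) 1, Wd P Q δ x y‖
        ≤ C1 * ‖Real.log x - Real.log (1 - x)‖ + C2 := by
  obtain ⟨A1, hA1⟩ := isCompact_Icc.exists_bound_of_continuousOn (continuous_cPQ P Q).continuousOn
  obtain ⟨A2, hA2⟩ := isCompact_Icc.exists_bound_of_continuousOn (continuous_cPQ Q P).continuousOn
  obtain ⟨B1, hB1pos, hB1⟩ := E_trunc_bound P Q
  obtain ⟨B2, hB2pos, hB2⟩ := E_trunc_bound Q P
  refine ⟨max A1 0 + max A2 0, B1 + B2,
    by positivity, by positivity, fun δ hδ x hx => ?_⟩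
  rw [← G_as_W, Kd_trunc_eq P Q hx hδ, trunc_formula P Q hx hδ, trunc_formula Q P hx hδ]
  have hxI : x ∈ Icc (0:ℝ) 1 := Set.Ioo_subset_Icc_self hx
  set D := max (Real.log x - Real.log δ) 0 - max (Real.log (1 - x) - Real.log δ) 0 with hD
  have hDb : |D| ≤ ‖Real.log x - Real.log (1 - x)‖ := by
    rw [Real.norm_eq_abs]
    have := abs_max_sub_max_le_abs (Real.log x - Real.log δ) (Real.log (1 - x) - Real.log δ) 0
    calc |D| ≤ |Real.log x - Real.log δ - (Real.log (1 - x) - Real.log δ)| := this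
      _ = |Real.log x - Real.log (1 - x)| := by ring_nf
  have e1 : ‖∫ y in Ioo (0:ℝ) 1 \ Ioo (x - δ) (x + δ), EPQ P Q x y‖ ≤ B1 :=
    hB1 x hxI _ Set.diff_subset
  have e2 : ‖∫ y in Ioo (0:ℝ) 1 \ Ioo (x - δ) (x + δ), EPQ Q P x y‖ ≤ B2 :=
    hB2 x hxI _ Set.diff_subset
  have c1 : |cPQ P Q x| ≤ max A1 0 := le_trans (hA1 x hxI) (le_max_left _ _)
  have c2 : |cPQ Q P x| ≤ max A2 0 := le_trans (hA2 x hxI) (le_max_left _ _)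
  rw [Real.norm_eq_abs] at e1 e2 ⊢
  have habs : |cPQ P Q x * D - (∫ y in Ioo (0:ℝ) 1 \ Ioo (x - δ) (x + δ), EPQ P Q x y)
      - (cPQ Q P x * D - ∫ y in Ioo (0:ℝ) 1 \ Ioo (x - δ) (x + δ), EPQ Q P x y)|
      ≤ |cPQ P Q x| * |D| + |cPQ Q P x| * |D|
        + (|∫ y in Ioo (0:ℝ) 1 \ Ioo (x - δ) (x + δ), EPQ P Q x y|
          + |∫ y in Ioo (0:ℝ) 1 \ Ioo (x - δ) (x + δ), EPQ Q P x y|) := by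
    calc |cPQ P Q x * D - (∫ y in Ioo (0:ℝ) 1 \ Ioo (x - δ) (x + δ), EPQ P Q x y)
        - (cPQ Q P x * D - ∫ y in Ioo (0:ℝ) 1 \ Ioo (x - δ) (x + δ), EPQ Q P x y)|
        ≤ |cPQ P Q x * D - cPQ Q P x * D|
          + |(∫ y in Ioo (0:ℝ) 1 \ Ioo (x - δ) (x + δ), EPQ P Q x y)
            - ∫ y in Ioo (0:ℝ) 1 \ Ioo (x - δ) (x + δ), EPQ Q P x y| := by
          have : cPQ P Q x * D - (∫ y in Ioo (0:ℝ) 1 \ Ioo (x - δ) (x + δ), EPQ P Q x y)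
              - (cPQ Q P x * D - ∫ y in Ioo (0:ℝ) 1 \ Ioo (x - δ) (x + δ), EPQ Q P x y)
              = (cPQ P Q x * D - cPQ Q P x * D)
                - ((∫ y in Ioo (0:ℝ) 1 \ Ioo (x - δ) (x + δ), EPQ P Q x y)
                  - ∫ y in Ioo (0:ℝ) 1 \ Ioo (x - δ) (x + δ), EPQ Q P x y) := by ring
          rw [this]
          exact abs_sub _ _
      _ ≤ (|cPQ P Q x| * |D| + |cPQ Q P x| * |D|)
          + (|∫ y in Ioo (0:ℝ) 1 \ Ioo (x - δ) (x + δ), EPQ P Q x y|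
            + |∫ y in Ioo (0:ℝ) 1 \ Ioo (x - δ) (x + δ), EPQ Q P x y|) := by
          gcongr
          · calc |cPQ P Q x * D - cPQ Q P x * D|
                ≤ |cPQ P Q x * D| + |cPQ Q P x * D| := abs_sub _ _
              _ = |cPQ P Q x| * |D| + |cPQ Q P x| * |D| := by rw [abs_mul, abs_mul]
          · exact abs_sub _ _
  refine habs.trans ?_
  have hn : (0:ℝ) ≤ ‖Real.log x - Real.log (1 - x)‖ := norm_nonneg _
  have t1 : |cPQ P Q x| * |D| ≤ max A1 0 * ‖Real.log x - Real.log (1 - x)‖ :=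
    mul_le_mul c1 hDb (abs_nonneg _) (le_max_right _ _)
  have t2 : |cPQ Q P x| * |D| ≤ max A2 0 * ‖Real.log x - Real.log (1 - x)‖ :=
    mul_le_mul c2 hDb (abs_nonneg _) (le_max_right _ _)
  rw [Real.norm_eq_abs] at t1 t2 ⊢
  nlinarith [e1, e2, t1, t2]

lemma integral_g_symm (P Q : Polynomial ℝ) :
    ∫ x in Ioo (0:ℝ) 1, gPQ P Q x = ∫ x in Ioo (0:ℝ) 1, gPQ Q P x := by
  have hsub : ∫ x in Ioo (0:ℝ) 1, (gPQ P Q x - gPQ Q P x) = 0 := by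
    set δ : ℕ → ℝ := fun n => 1 / ((n : ℝ) + 1) with hδdef
    have hδpos : ∀ n, 0 < δ n := fun n => by positivity
    have hδ0 : Tendsto δ atTop (nhdsWithin 0 (Ioi 0)) := by
      rw [tendsto_nhdsWithin_iff]
      exact ⟨tendsto_one_div_add_atTop_nhds_zero_nat,
        Eventually.of_forall fun n => hδpos n⟩
    set F : ℕ → ℝ → ℝ := fun n x => ∫ y in Ioo (0:ℝ) 1, Wd P Q (δ n) x y with hFdef
    obtain ⟨C1, C2, hC1, hC2, hCb⟩ := G_bound P Q
    have hmeas : ∀ n, AEStronglyMeasurable (F n) (volume.restrict (Ioo (0:ℝ) 1)) := fun n =>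
      (integrable_Wd P Q (hδpos n)).aestronglyMeasurable.integral_prod_right'
    have hbound : ∀ n, ∀ᵐ x ∂(volume.restrict (Ioo (0:ℝ) 1)),
        ‖F n x‖ ≤ C1 * ‖Real.log x - Real.log (1 - x)‖ + C2 := by
      intro n
      filter_upwards [ae_restrict_mem measurableSet_Ioo] with x hx
      exact hCb (δ n) (hδpos n) x hx
    have hbint : Integrable (fun x => C1 * ‖Real.log x - Real.log (1 - x)‖ + C2)
        (volume.restrict (Ioo (0:ℝ) 1)) :=
      (((integrableOn_log_Ioo.sub integrableOn_log_one_sub_Ioo).norm).const_mul C1).add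
        (integrable_const C2)
    have hlim : ∀ᵐ x ∂(volume.restrict (Ioo (0:ℝ) 1)),
        Tendsto (fun n => F n x) atTop (nhds (gPQ P Q x - gPQ Q P x)) := by
      filter_upwards [ae_restrict_mem measurableSet_Ioo] with x hx
      have hPV : Tendsto (fun d : ℝ =>
          (∫ y in Ioo (0:ℝ) 1 \ Ioo (x - d) (x + d),
              P.eval x * (Q.eval x - Q.eval y) / (x - y) ^ 2)
            - ∫ y in Ioo (0:ℝ) 1 \ Ioo (x - d) (x + d),
                Q.eval x * (P.eval x - P.eval y) / (x - y) ^ 2)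
          (nhdsWithin 0 (Ioi 0)) (nhds (gPQ P Q x - gPQ Q P x)) :=
        (tendsto_PV P Q hx).sub (tendsto_PV Q P hx)
      have hcomp := hPV.comp hδ0
      refine hcomp.congr fun n => ?_
      have heq := (G_as_W P Q x (δ n)).symm.trans (Kd_trunc_eq P Q hx (hδpos n))
      exact heq.symm
    have hDCT := tendsto_integral_of_dominated_convergence _ hmeas hbint hbound hlim
    have hzero : ∀ n, ∫ x in Ioo (0:ℝ) 1, F n x = 0 := fun n =>
      integral_W_zero P Q (hδpos n)
    have : Tendsto (fun n : ℕ => (0:ℝ)) atTop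
        (nhds (∫ x in Ioo (0:ℝ) 1, (gPQ P Q x - gPQ Q P x))) := by
      refine hDCT.congr fun n => ?_
      exact hzero n
    exact (tendsto_nhds_unique tendsto_const_nhds this).symm
  have := integral_sub (integrableOn_gPQ P Q) (integrableOn_gPQ Q P)
  rw [this] at hsub
  linarith

lemma legendre_poly (ℓ : ℕ) : ∃ P : Polynomial ℝ, ∀ x : ℝ, legendreP ℓ (1 - 2 * x) = P.eval x := by
  refine ⟨Polynomial.C (((2:ℝ)^ℓ * (Nat.factorial ℓ : ℝ))⁻¹) *
    ((derivative^[ℓ] (((X:Polynomial ℝ)^2 - 1)^ℓ)).comp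
      (Polynomial.C 1 - Polynomial.C 2 * X)), fun x => ?_⟩
  unfold legendreP
  have h : (fun t : ℝ => (t^2 - 1)^ℓ) = fun t => ((((X:Polynomial ℝ)^2 - 1))^ℓ).eval t := by
    funext t; simp
  rw [h, iteratedDeriv_polyeval]
  simp [Polynomial.eval_comp]

end

/-- Symmetry of the truncated lightcone Hamiltonian of 2D large-`N_c` QCD:
`J(ℓ,ℓ') = J(ℓ',ℓ)` (both are well defined with a common value). -/
theorem J_symm (ℓ ℓ' : ℕ) : ∃ v : ℝ, IsJ ℓ ℓ' v ∧ IsJ ℓ' ℓ v := by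
  obtain ⟨P, hP⟩ := legendre_poly ℓ
  obtain ⟨Q, hQ⟩ := legendre_poly ℓ'
  refine ⟨∫ x in Ioo (0:ℝ) 1, gPQ P Q x,
    ⟨gPQ P Q, fun x hx => ?_, integrableOn_gPQ P Q, rfl⟩,
    ⟨gPQ Q P, fun x hx => ?_, integrableOn_gPQ Q P, integral_g_symm Q P⟩⟩
  · refine (tendsto_PV P Q hx).congr fun d => ?_
    refine setIntegral_congr_fun (measurableSet_Ioo.diff measurableSet_Ioo) fun y _ => ?_
    rw [hP, hQ, hQ]
  · refine (tendsto_PV Q P hx).congr fun d => ?_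
    refine setIntegral_congr_fun (measurableSet_Ioo.diff measurableSet_Ioo) fun y _ => ?_
    rw [hQ, hP, hP]
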